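/- Let f : Ω → ℝᵠ be continuous on an open Ω ⊆ ℝⁿ with a locally inessential isolated zero at p (only zero in B(p,R) ⊆ Ω). Then for any ρ ∈ (0,R), there exist a continuous map j : Ω → ℝᵠ and a continuous homotopy F : Ω × [0,1] → ℝᵠ with F(·,0) = f and F(·,1) = j such that: F(x,t) = f(x) for all x ∈ Ω \ B(p,ρ) and all t ∈ [0,1]; and for all t > 0, F(x,t) ≠ 0 for every x ∈ B(p,R). -/

import Mathlib

open Metric Set Filter Topology
theorem my_continuousOn_if_le {X Y : Type*} [TopologicalSpace X] [TopologicalSpace Y]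
    {g₁ g₂ : X → Y} {a : X → ℝ} {ρ : ℝ} {s : Set X}
    (ha : ContinuousOn a s)
    (h₁ : ContinuousOn g₁ (s ∩ {x | a x ≤ ρ}))
    (h₂ : ContinuousOn g₂ (s ∩ {x | ρ ≤ a x}))
    (heq : ∀ x ∈ s, a x = ρ → g₁ x = g₂ x) :
    ContinuousOn (fun x => if a x ≤ ρ then g₁ x else g₂ x) s := by
  intro x hx
  rcases lt_trichotomy (a x) ρ with h | h | h
  · have hev : ∀ᶠ y in 𝓝[s] x, a y < ρ := (ha x hx).eventually_lt tendsto_const_nhds h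
    have hmem : s ∩ {y | a y ≤ ρ} ∈ 𝓝[s] x :=
      Filter.inter_mem self_mem_nhdsWithin (hev.mono fun y hy => le_of_lt hy)
    refine ContinuousWithinAt.congr_of_eventuallyEq
      (((h₁ x ⟨hx, h.le⟩).mono_of_mem_nhdsWithin hmem)) ?_ (if_pos h.le)
    exact hev.mono fun y hy => if_pos hy.le
  · have c1 : ContinuousWithinAt (fun y => if a y ≤ ρ then g₁ y else g₂ y)
        (s ∩ {y | a y ≤ ρ}) x :=
      (h₁ x ⟨hx, h.le⟩).congr (fun y hy => if_pos hy.2) (if_pos h.le)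
    have c2 : ContinuousWithinAt (fun y => if a y ≤ ρ then g₁ y else g₂ y)
        (s ∩ {y | ρ ≤ a y}) x := by
      refine (h₂ x ⟨hx, h.ge⟩).congr (fun y hy => ?_) (by rw [if_pos h.le]; exact heq x hx h)
      by_cases h' : a y ≤ ρ
      · rw [if_pos h']; exact heq y hy.1 (le_antisymm h' hy.2)
      · rw [if_neg h']
    exact (c1.union c2).mono fun y hy => by
      rcases le_total (a y) ρ with h' | h'
      · exact Or.inl ⟨hy, h'⟩
      · exact Or.inr ⟨hy, h'⟩
  · have hev : ∀ᶠ y in 𝓝[s] x, ρ < a y := tendsto_const_nhds.eventually_lt (ha x hx) h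
    have hmem : s ∩ {y | ρ ≤ a y} ∈ 𝓝[s] x :=
      Filter.inter_mem self_mem_nhdsWithin (hev.mono fun y hy => le_of_lt hy)
    refine ContinuousWithinAt.congr_of_eventuallyEq
      (((h₂ x ⟨hx, h.le⟩).mono_of_mem_nhdsWithin hmem)) ?_ (if_neg (not_le.2 h))
    exact hev.mono fun y hy => if_neg (not_le.2 hy)

noncomputable section NHAux

variable {E V : Type*} [NormedAddCommGroup E] [NormedSpace ℝ E]
  [NormedAddCommGroup V] [NormedSpace ℝ V]

/-- auxiliary scalar: interpolation parameter -/
def nhS (ρ r t : ℝ) : ℝ := max (t*ρ - r) 0 / (t*ρ)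

def nhθ (ρ r t : ℝ) : ℝ := max (2 * nhS ρ r t - 1) 0

def nhA (ρ r t : ℝ) : ℝ := min ρ (r + t*(ρ+1))

def nhα (ρ r t : ℝ) : ℝ := (1 - nhθ ρ r t) * nhA ρ r t + nhθ ρ r t * (ρ+1)

def nhβ (ρ r t : ℝ) : ℝ := 1 - (1-t) * min (2 * nhS ρ r t) 1

def nhU (p x : E) : E := ‖x - p‖⁻¹ • (x - p)

lemma nhS_zero (ρ r : ℝ) : nhS ρ r 0 = 0 := by simp [nhS]

lemma nhS_nonneg {ρ r t : ℝ} (hρ : 0 < ρ) (hr : 0 ≤ r) (ht : 0 ≤ t) : 0 ≤ nhS ρ r t :=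
  div_nonneg (le_max_right _ _) (by positivity)

lemma nhS_le_one {ρ r t : ℝ} (hρ : 0 < ρ) (hr : 0 ≤ r) (ht : 0 ≤ t) : nhS ρ r t ≤ 1 := by
  rcases eq_or_lt_of_le ht with h | h
  · simp [nhS, ← h]
  · rw [nhS, div_le_one (by positivity)]
    exact max_le (by linarith) (by positivity)

lemma nhS_of_le {ρ r t : ℝ} (h : t * ρ ≤ r) : nhS ρ r t = 0 := by
  rw [nhS, max_eq_right (by linarith), zero_div]

lemma nhθ_nonneg (ρ r t : ℝ) : 0 ≤ nhθ ρ r t := le_max_right _ _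

lemma nhθ_le_one {ρ r t : ℝ} (hρ : 0 < ρ) (hr : 0 ≤ r) (ht : 0 ≤ t) : nhθ ρ r t ≤ 1 := by
  have := nhS_le_one hρ hr ht
  rw [nhθ]
  apply max_le (by linarith) zero_le_one

lemma nhA_nonneg {ρ r t : ℝ} (hρ : 0 < ρ) (hr : 0 ≤ r) (ht : 0 ≤ t) : 0 ≤ nhA ρ r t :=
  le_min hρ.le (by positivity)

lemma nhA_le {ρ r t : ℝ} : nhA ρ r t ≤ ρ := min_le_left _ _

lemma nhα_nonneg {ρ r t : ℝ} (hρ : 0 < ρ) (hr : 0 ≤ r) (ht : 0 ≤ t) : 0 ≤ nhα ρ r t := by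
  have h1 := nhθ_nonneg ρ r t
  have h2 := nhθ_le_one hρ hr ht
  have h3 := nhA_nonneg hρ hr ht
  have : (0:ℝ) ≤ ρ + 1 := by linarith
  rw [nhα]; nlinarith

lemma nhα_le {ρ r t : ℝ} (hρ : 0 < ρ) (hr : 0 ≤ r) (ht : 0 ≤ t) : nhα ρ r t ≤ ρ + 1 := by
  have h1 := nhθ_nonneg ρ r t
  have h2 := nhθ_le_one hρ hr ht
  have h3 := nhA_nonneg hρ hr ht
  have h4 : nhA ρ r t ≤ ρ + 1 := le_trans nhA_le (by linarith)
  rw [nhα]; nlinarith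

lemma nhβ_le_one {ρ r t : ℝ} (hρ : 0 < ρ) (hr : 0 ≤ r) (ht : 0 ≤ t) (ht1 : t ≤ 1) :
    nhβ ρ r t ≤ 1 := by
  have h1 : 0 ≤ min (2 * nhS ρ r t) 1 :=
    le_min (by have := nhS_nonneg hρ hr ht; linarith) zero_le_one
  rw [nhβ]; nlinarith

lemma nhβ_ge {ρ r t : ℝ} (hρ : 0 < ρ) (hr : 0 ≤ r) (ht : 0 ≤ t) (ht1 : t ≤ 1) :
    t ≤ nhβ ρ r t := by
  have h2 : min (2 * nhS ρ r t) 1 ≤ 1 := min_le_right _ _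
  rw [nhβ]; nlinarith

lemma norm_nhU {p x : E} (h : x ≠ p) : ‖nhU p x‖ = 1 := by
  rw [nhU, norm_smul, norm_inv, norm_norm]
  exact inv_mul_cancel₀ (norm_ne_zero_iff.2 (sub_ne_zero.2 h))

lemma norm_smul_nhU {p x : E} (h : x ≠ p) {σ : ℝ} (hσ : 0 ≤ σ) :
    ‖p + σ • nhU p x - p‖ = σ := by
  rw [add_sub_cancel_left, norm_smul, norm_nhU h, mul_one, Real.norm_eq_abs, abs_of_nonneg hσ]

lemma smul_nhU_self {p x : E} (h : x ≠ p) : ‖x - p‖ • nhU p x = x - p := by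
  rw [nhU, smul_smul, mul_inv_cancel₀ (norm_ne_zero_iff.2 (sub_ne_zero.2 h)), one_smul]

end NHAux

noncomputable section NHGamma

variable {E V : Type*} [NormedAddCommGroup E] [NormedSpace ℝ E]
  [NormedAddCommGroup V] [NormedSpace ℝ V]

def nhΓ (f : E → V) (G : E × ℝ → V) (p : E) (ρ : ℝ) (w : E × ℝ) : V :=
  if w.2 ≤ ρ then f (p + w.2 • nhU p w.1) else G (p + ρ • nhU p w.1, max 0 (min (w.2 - ρ) 1))

lemma nhU_continuousOn (p : E) : ContinuousOn (nhU p) {x : E | x ≠ p} := by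
  apply ContinuousOn.smul
  · exact ((continuous_id.sub continuous_const).norm.continuousOn).inv₀ fun x hx =>
      norm_ne_zero_iff.2 (sub_ne_zero.2 hx)
  · exact (continuous_id.sub continuous_const).continuousOn

lemma nhΓ_continuousOn {Ω : Set E} {f : E → V} {G : E × ℝ → V} {p : E} {ρ : ℝ}
    (hρ : 0 < ρ) (hf : ContinuousOn f Ω) (hsub : closedBall p ρ ⊆ Ω)
    (hGcont : ContinuousOn G (sphere p ρ ×ˢ Icc (0:ℝ) 1))
    (hG0 : ∀ x ∈ sphere p ρ, G (x, 0) = f x) :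
    ContinuousOn (nhΓ f G p ρ) ({x : E | x ≠ p} ×ˢ Icc (0:ℝ) (ρ+1)) := by
  set S : Set (E × ℝ) := {x : E | x ≠ p} ×ˢ Icc (0:ℝ) (ρ+1) with hS
  have hUcont : ContinuousOn (fun w : E × ℝ => nhU p w.1) S :=
    (nhU_continuousOn p).comp continuous_fst.continuousOn fun w hw => hw.1
  apply my_continuousOn_if_le (a := fun w : E × ℝ => w.2)
  · exact continuous_snd.continuousOn
  · -- inner branch : f at radius σ
    apply hf.comp
    · exact continuousOn_const.add ((continuous_snd.continuousOn.mono inter_subset_left).smul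
        (hUcont.mono inter_subset_left))
    · rintro ⟨x, σ⟩ ⟨⟨hx, hσ⟩, hσρ⟩
      apply hsub
      simp only [mem_closedBall, dist_eq_norm]
      rw [norm_smul_nhU hx hσ.1]
      exact hσρ
  · -- outer branch : G
    apply hGcont.comp
    · apply ContinuousOn.prodMk
      · exact continuousOn_const.add ((continuousOn_const).smul
          (hUcont.mono inter_subset_left))
      · fun_prop
    · rintro ⟨x, σ⟩ ⟨⟨hx, hσ⟩, hσρ⟩
      constructor
      · simp only [mem_sphere, dist_eq_norm]
        exact norm_smul_nhU hx hρ.le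
      · constructor
        · exact le_max_left 0 _
        · exact max_le zero_le_one (le_trans (min_le_right _ _) le_rfl)
  · rintro ⟨x, σ⟩ ⟨hx, hσ⟩ (hσρ : σ = ρ)
    have hmem : p + ρ • nhU p x ∈ sphere p ρ := by
      simp only [mem_sphere, dist_eq_norm]; exact norm_smul_nhU hx hρ.le
    rw [hσρ, show max 0 (min (ρ - ρ) 1) = 0 by simp]
    exact (hG0 _ hmem).symm

end NHGamma

noncomputable section NHF

variable {E V : Type*} [NormedAddCommGroup E] [NormedSpace ℝ E]
  [NormedAddCommGroup V] [NormedSpace ℝ V]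

open Classical in
def nhF₁ (f : E → V) (G : E × ℝ → V) (p : E) (ρ : ℝ) (c : V) (z : E × ℝ) : V :=
  if z.1 = p then z.2 • c
  else nhβ ρ ‖z.1 - p‖ z.2 • nhΓ f G p ρ (z.1, nhα ρ ‖z.1 - p‖ z.2)

def nhF (f : E → V) (G : E × ℝ → V) (p : E) (ρ : ℝ) (c : V) (z : E × ℝ) : V :=
  if ‖z.1 - p‖ ≤ ρ then nhF₁ f G p ρ c z else f z.1

variable {f : E → V} {G : E × ℝ → V} {p : E} {ρ : ℝ} {c : V}

lemma nhF₁_at_zero (hρ : 0 < ρ) (hp : f p = 0) {x : E} (hx : ‖x - p‖ ≤ ρ) :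
    nhF₁ f G p ρ c (x, 0) = f x := by
  rcases eq_or_ne x p with rfl | hxp
  · simp [nhF₁, hp]
  · have hr0 : (0:ℝ) ≤ ‖x - p‖ := norm_nonneg _
    rw [nhF₁, if_neg hxp]
    have hs : nhS ρ ‖x - p‖ 0 = 0 := nhS_zero ρ _
    have hθ : nhθ ρ ‖x - p‖ 0 = 0 := by rw [nhθ, hs]; norm_num
    have hA : nhA ρ ‖x - p‖ 0 = ‖x - p‖ := by
      rw [nhA]; rw [min_eq_right]; ring_nf; linarith [hx]
    have hα : nhα ρ ‖x - p‖ 0 = ‖x - p‖ := by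
      rw [nhα, hθ, hA]; ring
    have hβ : nhβ ρ ‖x - p‖ 0 = 1 := by rw [nhβ, hs]; norm_num
    rw [hα, hβ, one_smul, nhΓ]
    simp only [if_pos hx]
    rw [smul_nhU_self hxp, add_sub_cancel]

lemma nhF₁_at_sphere (hρ : 0 < ρ) {x : E} (hx : ‖x - p‖ = ρ) {t : ℝ}
    (ht : 0 ≤ t) (ht1 : t ≤ 1) :
    nhF₁ f G p ρ c (x, t) = f x := by
  have hxp : x ≠ p := fun h => by rw [h, sub_self, norm_zero] at hx; exact absurd hx.symm hρ.ne'
  rw [nhF₁, if_neg hxp, hx]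
  have hs : nhS ρ ρ t = 0 := nhS_of_le (by nlinarith)
  have hθ : nhθ ρ ρ t = 0 := by rw [nhθ, hs]; norm_num
  have hA : nhA ρ ρ t = ρ := by rw [nhA, min_eq_left]; nlinarith
  have hα : nhα ρ ρ t = ρ := by rw [nhα, hθ, hA]; ring
  have hβ : nhβ ρ ρ t = 1 := by rw [nhβ, hs]; norm_num
  rw [hα, hβ, one_smul, nhΓ]
  simp only [if_pos le_rfl]
  rw [← hx, smul_nhU_self hxp, add_sub_cancel]

lemma nhF₁_ne_zero {R : ℝ} (hρ : 0 < ρ) (hρR : ρ < R)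
    (hiso : ∀ x ∈ ball p R, f x = 0 → x = p) (hc : c ≠ 0)
    (hGne : ∀ x ∈ sphere p ρ, ∀ t ∈ Icc (0:ℝ) 1, G (x, t) ≠ 0)
    {x : E} {t : ℝ} (hxρ : ‖x - p‖ ≤ ρ) (ht : 0 < t) (ht1 : t ≤ 1) :
    nhF₁ f G p ρ c (x, t) ≠ 0 := by
  rcases eq_or_ne x p with rfl | hxp
  · rw [nhF₁, if_pos rfl]
    exact smul_ne_zero ht.ne' hc
  · rw [nhF₁, if_neg hxp]
    have hr0 : (0:ℝ) ≤ ‖x - p‖ := norm_nonneg _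
    set r := ‖x - p‖
    have hβpos : 0 < nhβ ρ r t := lt_of_lt_of_le ht (nhβ_ge hρ hr0 ht.le ht1)
    apply smul_ne_zero hβpos.ne'
    rw [nhΓ]
    by_cases hcase : nhα ρ r t ≤ ρ
    · -- inner branch: f at radius α with 0 < α ≤ ρ
      have hθ1 : nhθ ρ r t < 1 := by
        by_contra hcon
        push_neg at hcon
        have h1 : nhθ ρ r t ≤ 1 := nhθ_le_one hρ hr0 ht.le
        have hθeq : nhθ ρ r t = 1 := le_antisymm h1 hcon
        have : nhα ρ r t = ρ + 1 := by rw [nhα, hθeq]; ring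
        rw [this] at hcase; linarith
      have hApos : 0 < nhA ρ r t := lt_min hρ (by nlinarith)
      have hθ0 := nhθ_nonneg ρ r t
      have hαpos : 0 < nhα ρ r t := by
        rw [nhα]; nlinarith
      have hmem : p + nhα ρ r t • nhU p x ∈ ball p R := by
        simp only [mem_ball, dist_eq_norm]
        rw [norm_smul_nhU hxp hαpos.le]; linarith
      have hne : p + nhα ρ r t • nhU p x ≠ p := by
        intro hcon
        have := norm_smul_nhU hxp hαpos.le (p := p) (x := x)
        rw [hcon, sub_self, norm_zero] at this
        linarith
      simp only [if_pos hcase]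
      intro hcon
      exact hne (hiso _ hmem hcon)
    · -- outer branch: G value
      simp only [if_neg hcase]
      apply hGne
      · simp only [mem_sphere, dist_eq_norm]
        exact norm_smul_nhU hxp hρ.le
      · exact ⟨le_max_left _ _, max_le zero_le_one (min_le_right _ _)⟩

end NHF

noncomputable section NHCont

variable {E V : Type*} [NormedAddCommGroup E] [NormedSpace ℝ E]
  [NormedAddCommGroup V] [NormedSpace ℝ V]
variable {f : E → V} {G : E × ℝ → V} {p : E} {ρ : ℝ} {c : V}

set_option maxHeartbeats 3000000 in
lemma nhF₁_continuousOn {Ω : Set E} {R : ℝ} [ProperSpace E]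
    (hρ : 0 < ρ) (hρR : ρ < R) (hΩ : IsOpen Ω) (hf : ContinuousOn f Ω)
    (hball : ball p R ⊆ Ω) (hp : f p = 0)
    (hGcont : ContinuousOn G (sphere p ρ ×ˢ Icc (0:ℝ) 1))
    (hG0 : ∀ x ∈ sphere p ρ, G (x, 0) = f x)
    (hG1 : ∀ x ∈ sphere p ρ, G (x, 1) = c) :
    ContinuousOn (nhF₁ f G p ρ c) (closedBall p ρ ×ˢ Icc (0:ℝ) 1) := by
  have hsub : closedBall p ρ ⊆ Ω := fun y hy =>
    hball (mem_ball.2 (lt_of_le_of_lt (mem_closedBall.1 hy) hρR))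
  have hΓ := nhΓ_continuousOn hρ hf hsub hGcont hG0
  set S : Set (E × ℝ) := {x : E | x ≠ p} ×ˢ Icc (0:ℝ) (ρ+1) with hSdef
  set D : Set (E × ℝ) := closedBall p ρ ×ˢ Icc (0:ℝ) 1 with hDdef
  have hrcont : Continuous fun z : E × ℝ => ‖z.1 - p‖ :=
    (continuous_fst.sub continuous_const).norm
  rintro ⟨x, t⟩ ⟨hx, ht⟩
  simp only [mem_closedBall, dist_eq_norm] at hx
  by_cases hxp : x = p
  · have hpx : p = x := hxp.symm
    subst hpx
    rcases eq_or_lt_of_le ht.1 with ht0 | ht0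
    · -- Case 1 : center, time 0
      have htz : (0:ℝ) = t := ht0
      subst htz
      rw [Metric.continuousWithinAt_iff]
      intro ε hε
      have hK : IsCompact (sphere p ρ ×ˢ Icc (0:ℝ) 1) :=
        (isCompact_sphere p ρ).prod isCompact_Icc
      obtain ⟨Mf, hMf⟩ := (isCompact_closedBall p ρ).exists_bound_of_continuousOn (hf.mono hsub)
      obtain ⟨MG, hMG⟩ := hK.exists_bound_of_continuousOn hGcont
      set M : ℝ := max (max Mf MG) ‖c‖ with hMdef
      have hM0 : 0 ≤ M := le_trans (norm_nonneg c) (le_max_right _ _)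
      have hMf' : ∀ w ∈ closedBall p ρ, ‖f w‖ ≤ M := fun w hw =>
        le_trans (hMf w hw) (le_trans (le_max_left _ _) (le_max_left _ _))
      have hMG' : ∀ w ∈ sphere p ρ ×ˢ Icc (0:ℝ) 1, ‖G w‖ ≤ M := fun w hw =>
        le_trans (hMG w hw) (le_trans (le_max_right _ _) (le_max_left _ _))
      have hMc : ‖c‖ ≤ M := le_max_right _ _
      clear_value M
      have hfp : ContinuousAt f p := hf.continuousAt (hΩ.mem_nhds (hsub (mem_closedBall_self hρ.le)))
      obtain ⟨δf, hδf, hff⟩ := Metric.continuousAt_iff.1 hfp ε hε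
      have hff' : ∀ w : E, dist w p < δf → ‖f w‖ < ε := by
        intro w hw
        have := hff hw
        rwa [hp, dist_zero_right] at this
      set δ : ℝ := min (δf/(ρ+2)) (ε/(M+1)) with hδdef
      have hδpos : 0 < δ := lt_min (by positivity) (by positivity)
      have hδ1 : δ ≤ δf/(ρ+2) := min_le_left _ _
      have hδ2 : δ ≤ ε/(M+1) := min_le_right _ _
      clear_value δ
      refine ⟨δ, hδpos, ?_⟩
      rintro ⟨y, s⟩ ⟨hy, hs⟩ hdist
      rw [Prod.dist_eq, max_lt_iff] at hdist
      obtain ⟨hd1, hd2⟩ := hdist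
      have hs0 : (0:ℝ) ≤ s := hs.1
      have hs1 : s ≤ 1 := hs.2
      have hsδ : s < δ := by
        have h' : dist s 0 < δ := hd2
        rwa [Real.dist_eq, sub_zero, abs_of_nonneg hs0] at h'
      have hδM : δ * (M+1) ≤ ε := by
        rw [le_div_iff₀ (by positivity : (0:ℝ) < M+1)] at hδ2; linarith
      have hδf' : δ * (ρ+2) ≤ δf := by
        rw [le_div_iff₀ (by positivity : (0:ℝ) < ρ+2)] at hδ1; linarith
      have hval : nhF₁ f G p ρ c (p, 0) = 0 := by simp [nhF₁]
      rw [hval, dist_zero_right]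
      by_cases hyp : y = p
      · have hpy : p = y := hyp.symm
        subst hpy
        have h' : nhF₁ f G p ρ c (p, s) = s • c := by simp [nhF₁]
        rw [h', norm_smul, Real.norm_eq_abs, abs_of_nonneg hs0]
        nlinarith [norm_nonneg c]
      · have hr0 : 0 < ‖y - p‖ := norm_sub_pos_iff.2 hyp
        have hrρ : ‖y - p‖ ≤ ρ := by simpa [mem_closedBall, dist_eq_norm] using hy
        have hrδ : ‖y - p‖ < δ := by rwa [dist_eq_norm] at hd1
        have hFval : nhF₁ f G p ρ c (y, s) =
            nhβ ρ ‖y - p‖ s • nhΓ f G p ρ (y, nhα ρ ‖y - p‖ s) := by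
          rw [nhF₁, if_neg hyp]
        rw [hFval, norm_smul, Real.norm_eq_abs]
        have hβ0 : 0 ≤ nhβ ρ ‖y - p‖ s := le_trans hs0 (nhβ_ge hρ (norm_nonneg _) hs0 hs1)
        have hβ1 : nhβ ρ ‖y - p‖ s ≤ 1 := nhβ_le_one hρ (norm_nonneg _) hs0 hs1
        rw [abs_of_nonneg hβ0]
        have hα0 : 0 ≤ nhα ρ ‖y - p‖ s := nhα_nonneg hρ (norm_nonneg _) hs0
        have hΓb : ‖nhΓ f G p ρ (y, nhα ρ ‖y - p‖ s)‖ ≤ M := by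
          simp only [nhΓ]
          by_cases hbr : nhα ρ ‖y - p‖ s ≤ ρ
          · rw [if_pos hbr]
            apply hMf'
            simp only [mem_closedBall, dist_eq_norm]
            rw [norm_smul_nhU hyp hα0]
            exact hbr
          · rw [if_neg hbr]
            apply hMG'
            refine ⟨?_, le_max_left _ _, max_le zero_le_one (min_le_right _ _)⟩
            simp only [mem_sphere, dist_eq_norm]
            exact norm_smul_nhU hyp hρ.le
        by_cases h2s : 2 * nhS ρ ‖y - p‖ s ≤ 1
        · have hθ0 : nhθ ρ ‖y - p‖ s = 0 := max_eq_right (by linarith)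
          have hαA : nhα ρ ‖y - p‖ s = nhA ρ ‖y - p‖ s := by rw [nhα, hθ0]; ring
          have hαsmall : nhα ρ ‖y - p‖ s < δ * (ρ+2) := by
            rw [hαA]
            calc nhA ρ ‖y - p‖ s ≤ ‖y - p‖ + s*(ρ+1) := min_le_right _ _
              _ < δ + δ*(ρ+1) := by nlinarith
              _ = δ*(ρ+2) := by ring
          have hαρ : nhα ρ ‖y - p‖ s ≤ ρ := by rw [hαA]; exact nhA_le
          have hΓval : nhΓ f G p ρ (y, nhα ρ ‖y - p‖ s) =
              f (p + nhα ρ ‖y - p‖ s • nhU p y) := by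
            simp only [nhΓ]
            rw [if_pos hαρ]
          have hfsmall : ‖f (p + nhα ρ ‖y - p‖ s • nhU p y)‖ < ε := by
            apply hff'
            rw [dist_eq_norm, norm_smul_nhU hyp hα0]
            linarith
          rw [hΓval]
          nlinarith [norm_nonneg (f (p + nhα ρ ‖y - p‖ s • nhU p y))]
        · have hβs : nhβ ρ ‖y - p‖ s = s := by
            rw [nhβ, min_eq_right (by linarith [not_le.1 h2s])]; ring
          rw [hβs]
          nlinarith [norm_nonneg (nhΓ f G p ρ (y, nhα ρ ‖y - p‖ s))]
    · -- Case 2 : center, positive time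
      rw [Metric.continuousWithinAt_iff]
      intro ε hε
      have hK : IsCompact (sphere p ρ ×ˢ Icc (0:ℝ) 1) :=
        (isCompact_sphere p ρ).prod isCompact_Icc
      obtain ⟨δG, hδG, hGu⟩ := Metric.uniformContinuousOn_iff.1
        (hK.uniformContinuousOn_of_continuous hGcont) (ε/3) (by positivity)
      have hc1 : (0:ℝ) < ‖c‖ + 1 := by positivity
      set m : ℝ := min δG 1 with hmdef
      have hm0 : 0 < m := lt_min hδG one_pos
      have hm1 : m ≤ 1 := min_le_right _ _
      set δ : ℝ := min (min (t/2) (ε/(3*(‖c‖+1)))) ((t*ρ*m)/(8*(ρ+1))) with hδdef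
      have hδpos : 0 < δ := by
        apply lt_min (lt_min (by linarith) (by positivity)) (by positivity)
      refine ⟨δ, hδpos, ?_⟩
      rintro ⟨y, s⟩ ⟨hy, hs⟩ hdist
      rw [Prod.dist_eq, max_lt_iff] at hdist
      obtain ⟨hd1, hd2⟩ := hdist
      have hδ1 : δ ≤ t/2 := le_trans (min_le_left _ _) (min_le_left _ _)
      have hδ2 : δ ≤ ε/(3*(‖c‖+1)) := le_trans (min_le_left _ _) (min_le_right _ _)
      have hδ3 : δ ≤ (t*ρ*m)/(8*(ρ+1)) := min_le_right _ _
      clear_value m δ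
      have hval : nhF₁ f G p ρ c (p, t) = t • c := by simp [nhF₁]
      rw [hval]
      have hstdist : |s - t| < δ := hd2
      by_cases hyp : y = p
      · have hpy : p = y := hyp.symm
        subst hpy
        have : nhF₁ f G p ρ c (p, s) = s • c := by simp [nhF₁]
        rw [this, dist_eq_norm, ← sub_smul, norm_smul, Real.norm_eq_abs]
        have h1 : |s - t| * ‖c‖ < δ * (‖c‖+1) := by
          nlinarith [norm_nonneg c, abs_nonneg (s - t)]
        have h2 : δ * (‖c‖ + 1) ≤ ε/3 := by
          rw [le_div_iff₀ (by positivity : (0:ℝ) < 3*(‖c‖+1))] at hδ2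
          nlinarith [norm_nonneg c]
        linarith
      · set r : ℝ := ‖y - p‖ with hrdef
        have hr0 : 0 < r := norm_sub_pos_iff.2 hyp
        have hrδ : r < δ := by rwa [dist_eq_norm] at hd1
        clear_value r
        have hst : t/2 ≤ s := by
          rw [abs_sub_lt_iff] at hstdist
          linarith
        have hs1 : s ≤ 1 := hs.2
        have hspos : 0 < s := lt_of_lt_of_le (by linarith) hst
        have hsρ : 0 < s * ρ := by positivity
        have htρ : 0 < t * ρ := by positivity
        have hδtρm : δ * (8*(ρ+1)) ≤ t*ρ*m := (le_div_iff₀ (by positivity)).1 hδ3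
        have hr4 : r ≤ s*ρ/4 := by nlinarith
        have hSval : nhS ρ r s = (s*ρ - r)/(s*ρ) := by
          rw [nhS, max_eq_left (by nlinarith)]
        have h2S : 1 ≤ 2 * nhS ρ r s := by
          rw [hSval, ← mul_div_assoc, le_div_iff₀ hsρ]
          nlinarith
        have hβ : nhβ ρ r s = s := by
          rw [nhβ, min_eq_right h2S]; ring
        have hθval : nhθ ρ r s = 2 * nhS ρ r s - 1 := max_eq_left (by linarith)
        have h1θval : 1 - nhθ ρ r s = 2*r/(s*ρ) := by
          rw [hθval, hSval]; field_simp; ring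
        have hαval : ρ + 1 - nhα ρ r s = (2*r/(s*ρ)) * (ρ + 1 - nhA ρ r s) := by
          rw [nhα, ← h1θval]; ring
        have hA0 : 0 ≤ nhA ρ r s := nhA_nonneg hρ hr0.le hspos.le
        have hAρ : nhA ρ r s ≤ ρ := nhA_le
        have hXeq : (ρ + 1 - nhα ρ r s) * (s*ρ) = 2*r*(ρ+1 - nhA ρ r s) := by
          rw [hαval, mul_right_comm, div_mul_cancel₀ _ hsρ.ne']
        have hb1 : 2*r*(ρ+1 - nhA ρ r s) ≤ 2*δ*(ρ+1) := by nlinarith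
        have hb2 : 2*δ*(ρ+1) ≤ t*ρ*m/4 := by nlinarith [hδtρm]
        have hb3 : t*ρ*m ≤ 2*(s*ρ)*m := by nlinarith [mul_nonneg (mul_nonneg (by linarith : (0:ℝ) ≤ 2*s - t) hρ.le) hm0.le]
        have hXb : ρ + 1 - nhα ρ r s ≤ m/2 := by
          rw [← mul_le_mul_iff_of_pos_right hsρ, hXeq]
          calc 2*r*(ρ+1 - nhA ρ r s) ≤ 2*δ*(ρ+1) := hb1
            _ ≤ t*ρ*m/4 := hb2
            _ ≤ 2*(s*ρ)*m/4 := by linarith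
            _ = m/2 * (s*ρ) := by ring
        have hαle : nhα ρ r s ≤ ρ + 1 := nhα_le hρ hr0.le hspos.le
        have hαgt : ρ < nhα ρ r s := by nlinarith
        have hclamp : max 0 (min (nhα ρ r s - ρ) 1) = nhα ρ r s - ρ := by
          rw [min_eq_left (by linarith), max_eq_right (by linarith)]
        have hΓval : nhΓ f G p ρ (y, nhα ρ r s) = G (p + ρ • nhU p y, nhα ρ r s - ρ) := by
          rw [nhΓ]
          simp only [if_neg (not_le.2 hαgt)]
          rw [hclamp]
        have hsphere : p + ρ • nhU p y ∈ sphere p ρ := by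
          simp only [mem_sphere, dist_eq_norm]
          exact norm_smul_nhU hyp hρ.le
        have hIcc1 : nhα ρ r s - ρ ∈ Icc (0:ℝ) 1 := mem_Icc.2 ⟨by linarith, by linarith⟩
        have hIcc2 : (1:ℝ) ∈ Icc (0:ℝ) 1 := mem_Icc.2 ⟨zero_le_one, le_rfl⟩
        have hGdist : dist (G (p + ρ • nhU p y, nhα ρ r s - ρ)) c < ε/3 := by
          have h1 := hGu (p + ρ • nhU p y, nhα ρ r s - ρ)
            ⟨hsphere, hIcc1⟩
            (p + ρ • nhU p y, 1) ⟨hsphere, hIcc2⟩ ?_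
          · rwa [hG1 _ hsphere] at h1
          · rw [Prod.dist_eq]
            simp only [dist_self, Real.dist_eq]
            rw [abs_of_nonpos (by linarith)]
            apply max_lt hδG
            have : m/2 < m := by linarith
            calc -(nhα ρ r s - ρ - 1) = ρ + 1 - nhα ρ r s := by ring
              _ ≤ m/2 := hXb
              _ < m := this
              _ ≤ δG := by rw [hmdef]; exact min_le_left _ _
        have hFval : nhF₁ f G p ρ c (y, s) = s • G (p + ρ • nhU p y, nhα ρ r s - ρ) := by
          rw [nhF₁, if_neg hyp]
          simp only [← hrdef]
          rw [hβ, hΓval]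
        rw [hFval]
        calc dist (s • G (p + ρ • nhU p y, nhα ρ r s - ρ)) (t • c)
            ≤ dist (s • G (p + ρ • nhU p y, nhα ρ r s - ρ)) (s • c) + dist (s • c) (t • c) :=
              dist_triangle _ _ _
          _ < ε := by
              have e1 : dist (s • G (p + ρ • nhU p y, nhα ρ r s - ρ)) (s • c)
                  = ‖s‖ * dist (G (p + ρ • nhU p y, nhα ρ r s - ρ)) c := dist_smul₀ _ _ _
              have e2 : dist (s • c) (t • c) = |s - t| * ‖c‖ := by
                rw [dist_eq_norm, ← sub_smul, norm_smul, Real.norm_eq_abs]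
              rw [e1, e2, Real.norm_eq_abs, abs_of_nonneg hspos.le]
              have b1 : s * dist (G (p + ρ • nhU p y, nhα ρ r s - ρ)) c ≤
                  dist (G (p + ρ • nhU p y, nhα ρ r s - ρ)) c := by
                nlinarith [dist_nonneg (x := G (p + ρ • nhU p y, nhα ρ r s - ρ)) (y := c)]
              have b2 : |s - t| * ‖c‖ < ε/3 := by
                have h2 : δ * (‖c‖ + 1) ≤ ε/3 := by
                  rw [le_div_iff₀ (by positivity : (0:ℝ) < 3*(‖c‖+1))] at hδ2
                  nlinarith [norm_nonneg c]
                nlinarith [norm_nonneg c, abs_nonneg (s - t)]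
              linarith
  · -- x ≠ p
    set W : Set (E × ℝ) := D ∩ ({y : E | y ≠ p} ×ˢ (univ : Set ℝ)) with hWdef
    have hWmem : W ∈ 𝓝[D] (x, t) :=
      inter_mem self_mem_nhdsWithin (mem_nhdsWithin_of_mem_nhds
        ((isOpen_ne.prod isOpen_univ).mem_nhds ⟨hxp, trivial⟩))
    have hmapα : MapsTo (fun z : E × ℝ => (z.1, nhα ρ ‖z.1 - p‖ z.2)) W S := by
      rintro ⟨y, s⟩ ⟨⟨hy1, hy2⟩, hy3, -⟩
      exact ⟨hy3, nhα_nonneg hρ (norm_nonneg _) hy2.1,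
        nhα_le hρ (norm_nonneg _) hy2.1⟩
    have hmapA : MapsTo (fun z : E × ℝ => (z.1, nhA ρ ‖z.1 - p‖ z.2)) W S := by
      rintro ⟨y, s⟩ ⟨⟨hy1, hy2⟩, hy3, -⟩
      exact ⟨hy3, nhA_nonneg hρ (norm_nonneg _) hy2.1,
        le_trans nhA_le (by linarith)⟩
    rcases eq_or_lt_of_le ht.1 with ht0 | ht0
    · -- Case 3 : x ≠ p, time 0
      subst ht0
      have hopen : IsOpen ({z : E × ℝ | z.2 * ρ < ‖z.1 - p‖} ∩ {z : E × ℝ | z.1 ≠ p}) :=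
        (isOpen_lt (continuous_snd.mul continuous_const) hrcont).inter
          (isOpen_ne.preimage continuous_fst)
      have hz0 : ((x, (0:ℝ)) : E × ℝ) ∈
          {z : E × ℝ | z.2 * ρ < ‖z.1 - p‖} ∩ {z : E × ℝ | z.1 ≠ p} := by
        refine ⟨?_, hxp⟩
        show (0:ℝ) * ρ < ‖x - p‖
        rw [zero_mul]
        exact norm_sub_pos_iff.2 hxp
      have key : ∀ z : E × ℝ, z.2 * ρ < ‖z.1 - p‖ → z.1 ≠ p →
          nhF₁ f G p ρ c z = nhΓ f G p ρ (z.1, nhA ρ ‖z.1 - p‖ z.2) := by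
        intro z h1 h2
        have hs : nhS ρ ‖z.1 - p‖ z.2 = 0 := nhS_of_le h1.le
        have hθ : nhθ ρ ‖z.1 - p‖ z.2 = 0 := by rw [nhθ, hs]; norm_num
        have hβ : nhβ ρ ‖z.1 - p‖ z.2 = 1 := by rw [nhβ, hs]; norm_num
        have hα : nhα ρ ‖z.1 - p‖ z.2 = nhA ρ ‖z.1 - p‖ z.2 := by rw [nhα, hθ]; ring
        simp only [nhF₁, if_neg h2, hα, hβ, one_smul]
      have hmemS : ((x, nhA ρ ‖x - p‖ 0) : E × ℝ) ∈ S :=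
        ⟨hxp, nhA_nonneg hρ (norm_nonneg _) le_rfl, le_trans nhA_le (by linarith)⟩
      have hΦ₂ : ContinuousWithinAt
          (fun z : E × ℝ => nhΓ f G p ρ (z.1, nhA ρ ‖z.1 - p‖ z.2)) W (x, 0) := by
        have hAcont : Continuous fun z : E × ℝ => nhA ρ ‖z.1 - p‖ z.2 := by
          simp only [nhA]
          exact continuous_const.min (hrcont.add (continuous_snd.mul continuous_const))
        exact ContinuousWithinAt.comp (f := fun z : E × ℝ => (z.1, nhA ρ ‖z.1 - p‖ z.2))
          (hΓ _ hmemS) (continuousAt_fst.prodMk hAcont.continuousAt).continuousWithinAt hmapA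
      refine ContinuousWithinAt.congr_of_eventuallyEq
        (hΦ₂.mono_of_mem_nhdsWithin hWmem) ?_ (key _ hz0.1 hz0.2)
      exact Filter.eventually_of_mem (mem_nhdsWithin_of_mem_nhds (hopen.mem_nhds hz0))
        fun z hz => key z hz.1 hz.2
    · -- Case 4 : x ≠ p, positive time
      have ht0' : t ≠ 0 := ht0.ne'
      have hScont : ContinuousAt (fun z : E × ℝ => nhS ρ ‖z.1 - p‖ z.2) (x, t) := by
        simp only [nhS]
        exact ContinuousAt.div
          (((continuous_snd.mul continuous_const).sub hrcont).max continuous_const).continuousAt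
          (continuous_snd.mul continuous_const).continuousAt (mul_ne_zero ht0' hρ.ne')
      have hθcont : ContinuousAt (fun z : E × ℝ => nhθ ρ ‖z.1 - p‖ z.2) (x, t) := by
        simp only [nhθ]
        exact ((continuousAt_const.mul hScont).sub continuousAt_const).max continuousAt_const
      have hAcont : Continuous fun z : E × ℝ => nhA ρ ‖z.1 - p‖ z.2 := by
        simp only [nhA]
        exact continuous_const.min (hrcont.add (continuous_snd.mul continuous_const))
      have hαcont : ContinuousAt (fun z : E × ℝ => nhα ρ ‖z.1 - p‖ z.2) (x, t) := by
        simp only [nhα]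
        exact ((continuousAt_const.sub hθcont).mul hAcont.continuousAt).add
          (hθcont.mul continuousAt_const)
      have hβcont : ContinuousAt (fun z : E × ℝ => nhβ ρ ‖z.1 - p‖ z.2) (x, t) := by
        simp only [nhβ]
        exact continuousAt_const.sub ((continuousAt_const.sub continuousAt_snd).mul
          ((continuousAt_const.mul hScont).min continuousAt_const))
      have hmemS : ((x, nhα ρ ‖x - p‖ t) : E × ℝ) ∈ S :=
        ⟨hxp, nhα_nonneg hρ (norm_nonneg _) ht.1, nhα_le hρ (norm_nonneg _) ht.1⟩
      have hΓat : ContinuousWithinAt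
          (fun z : E × ℝ => nhΓ f G p ρ (z.1, nhα ρ ‖z.1 - p‖ z.2)) W (x, t) :=
        ContinuousWithinAt.comp (f := fun z : E × ℝ => (z.1, nhα ρ ‖z.1 - p‖ z.2))
          (hΓ _ hmemS) (continuousAt_fst.prodMk hαcont).continuousWithinAt hmapα
      have hΦ : ContinuousWithinAt (fun z : E × ℝ =>
          nhβ ρ ‖z.1 - p‖ z.2 • nhΓ f G p ρ (z.1, nhα ρ ‖z.1 - p‖ z.2)) W (x, t) :=
        hβcont.continuousWithinAt.smul hΓat
      refine ContinuousWithinAt.mono_of_mem_nhdsWithin ?_ hWmem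
      refine hΦ.congr (fun z hz => ?_) ?_
      · simp only [nhF₁, if_neg hz.2.1]
      · simp only [nhF₁, if_neg hxp]

end NHCont

/-- `f` restricted to `A` is null-homotopic as a map into `X` ⊆ ℝ^q:
there is a continuous homotopy within `X` from `f|_A` to a constant map. -/
def IsNullHomotopicOn {n q : ℕ}
    (f : EuclideanSpace ℝ (Fin n) → EuclideanSpace ℝ (Fin q))
    (A : Set (EuclideanSpace ℝ (Fin n)))
    (X : Set (EuclideanSpace ℝ (Fin q))) : Prop :=
  ∃ (F : EuclideanSpace ℝ (Fin n) × ℝ → EuclideanSpace ℝ (Fin q))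
    (c : EuclideanSpace ℝ (Fin q)),
      c ∈ X ∧
      ContinuousOn F (A ×ˢ Icc (0:ℝ) 1) ∧
      (∀ x ∈ A, F (x, 0) = f x) ∧
      (∀ x ∈ A, F (x, 1) = c) ∧
      (∀ x ∈ A, ∀ t ∈ Icc (0:ℝ) 1, F (x, t) ∈ X)

theorem stmt16 {n q : ℕ} (Ω : Set (EuclideanSpace ℝ (Fin n)))
    (f : EuclideanSpace ℝ (Fin n) → EuclideanSpace ℝ (Fin q))
    (p : EuclideanSpace ℝ (Fin n)) (R : ℝ)
    (hΩ : IsOpen Ω) (hf : ContinuousOn f Ω) (hR : 0 < R)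
    (hball : ball p R ⊆ Ω) (hp : f p = 0)
    (hiso : ∀ x ∈ ball p R, f x = 0 → x = p)
    (hinessential : ∀ r ∈ Ioo (0:ℝ) R,
      IsNullHomotopicOn f (sphere p r) {y | y ≠ 0}) :
    ∀ ρ ∈ Ioo (0:ℝ) R,
      ∃ (j : EuclideanSpace ℝ (Fin n) → EuclideanSpace ℝ (Fin q))
        (F : EuclideanSpace ℝ (Fin n) × ℝ → EuclideanSpace ℝ (Fin q)),
        ContinuousOn j Ω ∧
        ContinuousOn F (Ω ×ˢ Icc (0:ℝ) 1) ∧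
        (∀ x ∈ Ω, F (x, 0) = f x) ∧
        (∀ x ∈ Ω, F (x, 1) = j x) ∧
        (∀ x ∈ Ω \ ball p ρ, ∀ t ∈ Icc (0:ℝ) 1, F (x, t) = f x) ∧
        (∀ t ∈ Icc (0:ℝ) 1, 0 < t → ∀ x ∈ ball p R, F (x, t) ≠ 0) := by
  rintro ρ ⟨hρ0, hρR⟩
  obtain ⟨G, c, hc, hGcont, hG0, hG1, hGne⟩ := hinessential ρ ⟨hρ0, hρR⟩
  have hc' : c ≠ 0 := hc
  have hGne' : ∀ x ∈ sphere p ρ, ∀ t ∈ Icc (0:ℝ) 1, G (x, t) ≠ 0 :=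
    fun x hx t ht => hGne x hx t ht
  have hF₁cont := nhF₁_continuousOn (R := R) hρ0 hρR hΩ hf hball hp hGcont hG0 hG1
  have hcontF : ContinuousOn (nhF f G p ρ c) (Ω ×ˢ Icc (0:ℝ) 1) := by
    show ContinuousOn
      (fun z : EuclideanSpace ℝ (Fin n) × ℝ =>
        if ‖z.1 - p‖ ≤ ρ then nhF₁ f G p ρ c z else f z.1) (Ω ×ˢ Icc (0:ℝ) 1)
    apply my_continuousOn_if_le
    · exact ((continuous_fst.sub continuous_const).norm).continuousOn
    · apply hF₁cont.mono
      rintro ⟨y, s⟩ ⟨⟨hy, hs⟩, hyρ⟩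
      exact ⟨by simpa [mem_closedBall, dist_eq_norm] using hyρ, hs⟩
    · exact hf.comp continuous_fst.continuousOn fun z hz => hz.1.1
    · rintro ⟨y, s⟩ ⟨hy, hs⟩ (h : ‖y - p‖ = ρ)
      exact nhF₁_at_sphere hρ0 h hs.1 hs.2
  refine ⟨fun x => nhF f G p ρ c (x, 1), nhF f G p ρ c, ?_, hcontF, ?_, fun x _ => rfl, ?_, ?_⟩
  · exact hcontF.comp (continuous_id.prodMk continuous_const).continuousOn
      fun x hx => ⟨hx, zero_le_one, le_rfl⟩
  · intro x hx
    rw [nhF]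
    by_cases h : ‖x - p‖ ≤ ρ
    · rw [if_pos h]; exact nhF₁_at_zero hρ0 hp h
    · rw [if_neg h]
  · rintro x ⟨hxΩ, hxball⟩ t ht
    have h1 : ρ ≤ ‖x - p‖ := by
      simp only [mem_ball, dist_eq_norm, not_lt] at hxball
      exact hxball
    rw [nhF]
    rcases eq_or_lt_of_le h1 with heq | hlt
    · rw [if_pos heq.ge]
      exact nhF₁_at_sphere hρ0 heq.symm ht.1 ht.2
    · rw [if_neg (not_le.2 hlt)]
  · intro t ht htpos x hx
    rw [nhF]
    by_cases h : ‖x - p‖ ≤ ρ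
    · rw [if_pos h]
      exact nhF₁_ne_zero hρ0 hρR hiso hc' hGne' h htpos ht.2
    · rw [if_neg h]
      intro h0
      have hxp : x = p := hiso x hx h0
      rw [hxp, sub_self, norm_zero] at h
      exact h hρ0.le
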